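/- Let u ≠ 0 in ℂ^N, b > 0, C = {z ∈ ℂ^N : |u^H z|² ≤ b}, and let x ∈ ℂ^N with |u^H x|² > b. Then z* = x + ((√b − |u^H x|)/(‖u‖₂² |u^H x|)) (u^H x) u is the orthogonal projection of x onto C: for every z ∈ C, ‖x − z*‖₂ ≤ ‖x − z‖₂. -/

import Mathlib

theorem stmt2 {N : ℕ} (u : EuclideanSpace ℂ (Fin N)) (hu : u ≠ 0)
    (b : ℝ) (hb : 0 < b)
    (C : Set (EuclideanSpace ℂ (Fin N)))
    (hC : C = {z : EuclideanSpace ℂ (Fin N) | ‖(inner ℂ u z : ℂ)‖ ^ 2 ≤ b})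
    (x : EuclideanSpace ℂ (Fin N)) (hx : ‖(inner ℂ u x : ℂ)‖ ^ 2 > b)
    (zstar : EuclideanSpace ℂ (Fin N))
    (hzstar : zstar = x + ((Real.sqrt b - ‖(inner ℂ u x : ℂ)‖) / (‖u‖ ^ 2 * ‖(inner ℂ u x : ℂ)‖)) •
      ((inner ℂ u x : ℂ) • u)) :
    zstar ∈ C ∧ ∀ z ∈ C, ‖x - zstar‖ ≤ ‖x - z‖ := by
  set α : ℂ := (inner ℂ u x : ℂ) with hαdef
  set a : ℝ := ‖α‖ with hadef
  have hun : (0 : ℝ) < ‖u‖ := norm_pos_iff.mpr hu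
  have hsb : 0 < Real.sqrt b := Real.sqrt_pos.mpr hb
  have ha : Real.sqrt b < a := by
    nlinarith [Real.sq_sqrt hb.le, norm_nonneg α, Real.sqrt_nonneg b]
  have ha0 : 0 < a := hsb.trans ha
  have haC : (a : ℂ) ≠ 0 := by exact_mod_cast ha0.ne'
  have huC : ((‖u‖ : ℝ) : ℂ) ≠ 0 := by exact_mod_cast hun.ne'
  set t : ℝ := (Real.sqrt b - a) / (‖u‖ ^ 2 * a) with htdef
  have hiz : (inner ℂ u zstar : ℂ) = ((Real.sqrt b / a : ℝ) : ℂ) * α := by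
    rw [hzstar, inner_add_right, RCLike.real_smul_eq_coe_smul (K := ℂ),
      inner_smul_right, inner_smul_right, inner_self_eq_norm_sq_to_K]
    rw [← hαdef, htdef]
    push_cast
    field_simp
    have h1 : (a : ℂ) * (a : ℂ)⁻¹ = 1 := mul_inv_cancel₀ haC
    have h2 : ((‖u‖ : ℝ) : ℂ) * ((‖u‖ : ℝ) : ℂ)⁻¹ = 1 := mul_inv_cancel₀ huC
    linear_combination α * ((Real.sqrt b : ℂ) - a) * (((‖u‖ : ℝ) : ℂ) * ((‖u‖ : ℝ) : ℂ)⁻¹ * h1 + h2)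
  have hmem : zstar ∈ C := by
    rw [hC]
    simp only [Set.mem_setOf_eq, hiz, norm_mul, Complex.norm_real, ← hadef]
    rw [Real.norm_eq_abs, abs_of_pos (div_pos hsb ha0)]
    rw [div_mul_cancel₀ _ ha0.ne']
    rw [Real.sq_sqrt hb.le]
  have hdist : ‖x - zstar‖ = (a - Real.sqrt b) / ‖u‖ := by
    have hw : x - zstar = -(t • (α • u)) := by rw [hzstar]; abel
    rw [hw, norm_neg, norm_smul, norm_smul, ← hadef]
    rw [Real.norm_eq_abs, htdef]
    rw [abs_of_neg (div_neg_of_neg_of_pos (by linarith) (by positivity))]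
    field_simp
    ring
  refine ⟨hmem, fun z hz => ?_⟩
  rw [hC] at hz
  simp only [Set.mem_setOf_eq] at hz
  have hz' : ‖(inner ℂ u z : ℂ)‖ ≤ Real.sqrt b := by
    rw [show b = Real.sqrt b ^ 2 from (Real.sq_sqrt hb.le).symm] at hz
    nlinarith [norm_nonneg (inner ℂ u z : ℂ)]
  have h1 : a - Real.sqrt b ≤ ‖(inner ℂ u (x - z) : ℂ)‖ := by
    rw [inner_sub_right]
    calc a - Real.sqrt b ≤ ‖α‖ - ‖(inner ℂ u z : ℂ)‖ := by rw [← hadef]; linarith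
      _ ≤ ‖α - (inner ℂ u z : ℂ)‖ := norm_sub_norm_le _ _
  have h2 : ‖(inner ℂ u (x - z) : ℂ)‖ ≤ ‖u‖ * ‖x - z‖ := norm_inner_le_norm u (x - z)
  rw [hdist, div_le_iff₀ hun]
  nlinarith
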